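/- Let α1, α2 ∈ ℂ be nonzero with α2 = kα1 for some real k > 0 (so 0 ∉ K(α1,α2) and 0, α1, α2 collinear). Then for any β1, β2 ∈ ℂ, the Minkowski product K(α1,α2)K(β1,β2) equals the convex hull K(α1β1, α1β2, α2β1, α2β2). -/

import Mathlib

open Set

private lemma mul_mem_segment' {a b β1 β2 : ℂ} (h : b ∈ segment ℝ β1 β2) :
    a * b ∈ segment ℝ (a * β1) (a * β2) := by
  obtain ⟨u, v, hu, hv, huv, rfl⟩ := h
  exact ⟨u, v, hu, hv, huv, by simp only [Complex.real_smul]; ring⟩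

private lemma seg_char' {α1 : ℂ} {k : ℝ} {a : ℂ}
    (h : a ∈ segment ℝ α1 ((k:ℂ) * α1)) :
    ∃ c ∈ segment ℝ 1 k, a = (c:ℂ) * α1 := by
  obtain ⟨u, v, hu, hv, huv, rfl⟩ := h
  refine ⟨u + v * k, ⟨u, v, hu, hv, huv, by simp [smul_eq_mul]⟩, ?_⟩
  simp only [Complex.real_smul]
  push_cast
  ring

private lemma seg_char_rev' {α1 : ℂ} {k : ℝ} {c : ℝ}
    (hc : c ∈ segment ℝ 1 k) : (c:ℂ) * α1 ∈ segment ℝ α1 ((k:ℂ) * α1) := by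
  obtain ⟨u, v, hu, hv, huv, rfl⟩ := hc
  refine ⟨u, v, hu, hv, huv, ?_⟩
  simp only [Complex.real_smul, smul_eq_mul]
  push_cast
  ring

private lemma seg_pos' {k : ℝ} (hk : 0 < k) {c : ℝ} (hc : c ∈ segment ℝ 1 k) :
    0 < c := by
  obtain ⟨u, v, hu, hv, huv, rfl⟩ := hc
  simp only [smul_eq_mul, mul_one]
  rcases hu.lt_or_eq with h | h
  · nlinarith [mul_nonneg hv hk.le]
  · have hv1 : v = 1 := by linarith
    nlinarith

theorem stmt_4 (α1 α2 β1 β2 : ℂ) (hα1 : α1 ≠ 0) (hα2 : α2 ≠ 0)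
    (k : ℝ) (hk : 0 < k) (hkα : α2 = (k : ℂ) * α1) :
    Set.image2 (· * ·) (segment ℝ α1 α2) (segment ℝ β1 β2) =
      convexHull ℝ ({α1 * β1, α1 * β2, α2 * β1, α2 * β2} : Set ℂ) := by
  apply Subset.antisymm
  · rintro x ⟨a, ha, b, hb, rfl⟩
    have hm1 : a * β1 ∈ segment ℝ (α1 * β1) (α2 * β1) := by
      rw [mul_comm a β1, mul_comm α1 β1, mul_comm α2 β1]
      exact mul_mem_segment' ha
    have hm2 : a * β2 ∈ segment ℝ (α1 * β2) (α2 * β2) := by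
      rw [mul_comm a β2, mul_comm α1 β2, mul_comm α2 β2]
      exact mul_mem_segment' ha
    have h1 : a * β1 ∈ convexHull ℝ ({α1 * β1, α1 * β2, α2 * β1, α2 * β2} : Set ℂ) :=
      segment_subset_convexHull (by simp) (by simp) hm1
    have h2 : a * β2 ∈ convexHull ℝ ({α1 * β1, α1 * β2, α2 * β1, α2 * β2} : Set ℂ) :=
      segment_subset_convexHull (by simp) (by simp) hm2
    exact (convex_convexHull ℝ _).segment_subset h1 h2 (mul_mem_segment' hb)
  · apply convexHull_min
    · rintro z hz
      simp only [mem_insert_iff, mem_singleton_iff] at hz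
      rcases hz with rfl | rfl | rfl | rfl
      · exact ⟨α1, left_mem_segment ℝ _ _, β1, left_mem_segment ℝ _ _, rfl⟩
      · exact ⟨α1, left_mem_segment ℝ _ _, β2, right_mem_segment ℝ _ _, rfl⟩
      · exact ⟨α2, right_mem_segment ℝ _ _, β1, left_mem_segment ℝ _ _, rfl⟩
      · exact ⟨α2, right_mem_segment ℝ _ _, β2, right_mem_segment ℝ _ _, rfl⟩
    · rintro x ⟨a1, ha1, b1, hb1, rfl⟩ y ⟨a2, ha2, b2, hb2, rfl⟩ p q hp hq hpq
      subst hkα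
      obtain ⟨c1, hc1, rfl⟩ := seg_char' ha1
      obtain ⟨c2, hc2, rfl⟩ := seg_char' ha2
      have hc1p := seg_pos' hk hc1
      have hc2p := seg_pos' hk hc2
      set c : ℝ := p * c1 + q * c2 with hc
      have hcpos : 0 < c := by
        rcases hp.lt_or_eq with h | h
        · nlinarith
        · have : q = 1 := by linarith
          nlinarith
      have hcseg : c ∈ segment ℝ 1 k :=
        (convex_segment (1:ℝ) k) hc1 hc2 hp hq hpq
      have hbseg : (p * c1 / c) • b1 + (q * c2 / c) • b2 ∈ segment ℝ β1 β2 := by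
        apply (convex_segment β1 β2) hb1 hb2
        · positivity
        · positivity
        · field_simp
          exact hc.symm
      refine ⟨(c:ℂ) * α1, seg_char_rev' hcseg,
        (p * c1 / c) • b1 + (q * c2 / c) • b2, hbseg, ?_⟩
      simp only [Complex.real_smul]
      push_cast
      have hcne : (c:ℂ) ≠ 0 := by exact_mod_cast hcpos.ne'
      field_simp
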